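/- Let p ≥ 2 be an integer and K a field. Let φ be the automorphism of the field of Hahn series H = HahnSeries ℚ K defined by φ(∑ f_γ z^γ) = ∑ f_γ z^{pγ}. Suppose C, D ∈ GL_d(K) and R ∈ GL_d(H) satisfy φ(R) D = C R. Then R has constant entries: R ∈ GL_d(K), and D = R^{-1} C R. -/

import Mathlib

/-- let `p ≥ 2`, `K` a field, and `φ` the automorphism of `HahnSeries ℚ K`
with `φ(∑ f_γ z^γ) = ∑ f_γ z^{pγ}` (so the coefficient of `φ(f)` at `γ` is the
coefficient of `f` at `γ/p`).  If `C, D ∈ GL_d(K)` and `R ∈ GL_d(H)` satisfy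
`φ(R) D = C R`, then `R` has constant entries, i.e. `R = R₀` for some `R₀ ∈ GL_d(K)`,
and `D = R₀⁻¹ C R₀`. -/
theorem stmt14 (p : ℕ) (hp : 2 ≤ p) (K : Type*) [Field K] (d : ℕ)
    (φ : HahnSeries ℚ K → HahnSeries ℚ K)
    (hφ : ∀ (f : HahnSeries ℚ K) (γ : ℚ), (φ f).coeff γ = f.coeff (γ / p))
    (C D : Matrix (Fin d) (Fin d) K) (hC : IsUnit C) (hD : IsUnit D)
    (R : Matrix (Fin d) (Fin d) (HahnSeries ℚ K)) (hR : IsUnit R)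
    (heq : (R.map φ) * (D.map (HahnSeries.C : K →+* HahnSeries ℚ K)) =
      (C.map (HahnSeries.C : K →+* HahnSeries ℚ K)) * R) :
    ∃ R₀ : Matrix (Fin d) (Fin d) K, IsUnit R₀ ∧
      R = R₀.map (HahnSeries.C : K →+* HahnSeries ℚ K) ∧ D = R₀⁻¹ * C * R₀ := by
  have hp1 : (1:ℚ) < p := by exact_mod_cast hp
  have hp0 : (0:ℚ) < p := by positivity
  set RC : ℚ → Matrix (Fin d) (Fin d) K := fun γ => Matrix.of fun i j => (R i j).coeff γ with hRC
  -- key coefficient relation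
  have key : ∀ γ : ℚ, RC (γ / p) * D = C * RC γ := by
    intro γ
    ext i j
    have h1 := congrArg (fun M => (HahnSeries.coeff.addMonoidHom γ) (M i j)) heq
    simp only [Matrix.mul_apply, Matrix.map_apply, map_sum,
      HahnSeries.coeff.addMonoidHom] at h1
    simp only [AddMonoidHom.coe_mk, ZeroHom.coe_mk, HahnSeries.C_apply,
      HahnSeries.coeff_mul_single_zero, HahnSeries.coeff_single_zero_mul, hφ] at h1
    simpa [Matrix.mul_apply, hRC] using h1
  have hCd : IsUnit C.det := (Matrix.isUnit_iff_isUnit_det C).mp hC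
  have hDd : IsUnit D.det := (Matrix.isUnit_iff_isUnit_det D).mp hD
  have zero_iff : ∀ γ : ℚ, RC γ = 0 ↔ RC (γ / p) = 0 := by
    intro γ
    constructor
    · intro h
      have h2 : RC (γ / p) * D = 0 := by rw [key, h, mul_zero]
      calc RC (γ / p) = RC (γ / p) * D * D⁻¹ := by
            rw [mul_assoc, Matrix.mul_nonsing_inv _ hDd, mul_one]
        _ = 0 := by rw [h2, zero_mul]
    · intro h
      have h2 : C * RC γ = 0 := by rw [← key, h, zero_mul]
      calc RC γ = C⁻¹ * (C * RC γ) := by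
            rw [← mul_assoc, Matrix.nonsing_inv_mul _ hCd, one_mul]
        _ = 0 := by rw [h2, mul_zero]
  set S : Set ℚ := ⋃ ij : Fin d × Fin d, (R ij.1 ij.2).support with hS
  have hSWF : S.IsWF := by
    have he : S = ((Finset.univ : Finset (Fin d × Fin d)).sup
        (fun ij => (R ij.1 ij.2).support)) := by
      rw [Finset.sup_set_eq_biUnion]
      simp [hS]
    rw [he, Finset.isWF_sup]
    intro ij _
    exact (R ij.1 ij.2).isWF_support
  have memS_iff : ∀ γ : ℚ, γ ∈ S ↔ RC γ ≠ 0 := by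
    intro γ
    simp only [hS, Set.mem_iUnion, HahnSeries.mem_support]
    constructor
    · rintro ⟨ij, h⟩ h0
      exact h (by have := congrFun (congrFun h0 ij.1) ij.2; simpa [hRC] using this)
    · intro h
      by_contra hc
      push_neg at hc
      exact h (by ext i j; simpa [hRC] using hc (i, j))
  have hzero : ∀ γ : ℚ, γ ≠ 0 → RC γ = 0 := by
    intro γ hγ
    by_contra h
    rcases lt_or_gt_of_ne hγ with hneg | hpos
    · have hmem : ∀ n : ℕ, γ * p ^ n ∈ S := by
        intro n
        rw [memS_iff]
        induction n with
        | zero => simpa using h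
        | succ n ih =>
          intro h0
          apply ih
          have e : γ * (p:ℚ) ^ (n+1) / p = γ * p ^ n := by
            field_simp; ring
          rw [← e]
          exact (zero_iff _).mp h0
      have hanti : StrictAnti (fun n : ℕ => γ * (p:ℚ) ^ n) := by
        intro m n hmn
        have h1 := pow_lt_pow_right₀ hp1 hmn
        have := mul_lt_mul_of_neg_left h1 hneg
        simpa using this
      exact (Set.isWF_iff_no_descending_seq.mp hSWF _ hanti) (fun n => hmem n)
    · have hmem : ∀ n : ℕ, γ / p ^ n ∈ S := by
        intro n
        rw [memS_iff]
        induction n with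
        | zero => simpa using h
        | succ n ih =>
          intro h0
          apply ih
          have e : γ / (p:ℚ) ^ n / p = γ / p ^ (n+1) := by
            rw [div_div, ← pow_succ]
          rw [zero_iff, e]
          exact h0
      have hanti : StrictAnti (fun n : ℕ => γ / (p:ℚ) ^ n) := by
        intro m n hmn
        have h1 := pow_lt_pow_right₀ hp1 hmn
        have h2 := pow_pos hp0 m
        have h3 := pow_pos hp0 n
        rw [div_lt_div_iff₀ h3 h2]
        nlinarith
      exact (Set.isWF_iff_no_descending_seq.mp hSWF _ hanti) (fun n => hmem n)
  -- R has constant entries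
  have hRmap : R = (RC 0).map (HahnSeries.C : K →+* HahnSeries ℚ K) := by
    ext i j γ
    simp only [Matrix.map_apply, HahnSeries.C_apply, hRC, Matrix.of_apply]
    obtain hγ | hγ := eq_or_ne γ 0
    · subst hγ; rw [HahnSeries.coeff_single_same]
    · rw [HahnSeries.coeff_single_of_ne hγ]
      have := hzero γ hγ
      have := congrFun (congrFun this i) j
      simpa [hRC] using this
  have hR0 : IsUnit (RC 0) := by
    rw [Matrix.isUnit_iff_isUnit_det]
    have hRd : IsUnit R.det := (Matrix.isUnit_iff_isUnit_det R).mp hR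
    rw [hRmap, ← RingHom.mapMatrix_apply, ← RingHom.map_det] at hRd
    have hne : (RC 0).det ≠ 0 := by
      intro h0
      rw [h0, map_zero] at hRd
      exact hRd.ne_zero rfl
    exact hne.isUnit
  refine ⟨RC 0, hR0, hRmap, ?_⟩
  have hkey0 : RC 0 * D = C * RC 0 := by
    have := key 0
    rwa [zero_div] at this
  have hR0d : IsUnit (RC 0).det := (Matrix.isUnit_iff_isUnit_det _).mp hR0
  calc D = (RC 0)⁻¹ * (RC 0 * D) := by
        rw [← mul_assoc, Matrix.nonsing_inv_mul _ hR0d, one_mul]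
    _ = (RC 0)⁻¹ * C * RC 0 := by rw [hkey0, mul_assoc]
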